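/- Let n₁, n₂, p be positive integers, X⁽¹⁾ ∈ ℝ^{n₁×p}, X⁽²⁾ ∈ ℝ^{n₂×p}, y⁽¹⁾ ∈ ℝ^{n₁}, y⁽²⁾ ∈ ℝ^{n₂}, and suppose there exists b ∈ ℝ^p with X⁽¹⁾b = y⁽¹⁾ and X⁽²⁾b = y⁽²⁾. Let β̂ be the unique element of minimal Euclidean norm of the affine set {b ∈ ℝ^p : X⁽¹⁾b = y⁽¹⁾, X⁽²⁾b = y⁽²⁾}. Then for every w₁, w₂ > 0 and every real n > 0, the matrix w₁X⁽¹⁾ᵀX⁽¹⁾ + w₂X⁽²⁾ᵀX⁽²⁾ + nλI is invertible for every λ > 0, and (w₁X⁽¹⁾ᵀX⁽¹⁾ + w₂X⁽²⁾ᵀX⁽²⁾ + nλI)⁻¹(w₁X⁽¹⁾ᵀy⁽¹⁾ + w₂X⁽²⁾ᵀy⁽²⁾) converges to β̂ as λ → 0⁺. In particular, this ridgeless limit is the same for every choice of positive weights w₁, w₂. -/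

import Mathlib

open Matrix Filter Topology

/-- Auxiliary: if a real symmetric-like matrix kills every vector whose quadratic form
vanishes, then any vector orthogonal to its kernel lies in its range. -/
lemma exists_mulVec_eq (p : ℕ) (A : Matrix (Fin p) (Fin p) ℝ)
    (hker : ∀ v : Fin p → ℝ, (A *ᵥ v) ⬝ᵥ v = 0 → A *ᵥ v = 0)
    (β : Fin p → ℝ) (hβ : ∀ v : Fin p → ℝ, A *ᵥ v = 0 → ∑ i, v i * β i = 0) :
    ∃ u : Fin p → ℝ, A *ᵥ u = β := by
  classical
  set E := EuclideanSpace ℝ (Fin p)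
  let T : E →ₗ[ℝ] E := Matrix.toEuclideanLin A
  have hT : ∀ x : E, T x = (WithLp.equiv 2 (Fin p → ℝ)).symm
      (A *ᵥ (WithLp.equiv 2 (Fin p → ℝ)) x) := fun _ => rfl
  have hinner : ∀ x y : E, (inner ℝ x y : ℝ) = ∑ i, x i * y i := fun x y => by
    simp [E, PiLp.inner_apply, RCLike.inner_apply, starRingEnd_apply]
    exact Finset.sum_congr rfl fun i _ => mul_comm _ _
  have hSK : (LinearMap.range T)ᗮ ≤ LinearMap.ker T := by
    intro x hx
    have h0 : (inner ℝ (T x) x : ℝ) = 0 :=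
      (Submodule.mem_orthogonal _ _).mp hx (T x) (LinearMap.mem_range_self T x)
    rw [hinner] at h0
    have h0' : (A *ᵥ (WithLp.equiv 2 (Fin p → ℝ)) x) ⬝ᵥ ((WithLp.equiv 2 (Fin p → ℝ)) x) = 0 := h0
    have := hker _ h0'
    rw [LinearMap.mem_ker, hT]
    simp [show A *ᵥ x.ofLp = 0 from this]
  have hβK : ((WithLp.equiv 2 (Fin p → ℝ)).symm β) ∈ (LinearMap.ker T)ᗮ := by
    rw [Submodule.mem_orthogonal]
    intro u hu
    rw [LinearMap.mem_ker, hT] at hu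
    have hu' : A *ᵥ (WithLp.equiv 2 (Fin p → ℝ)) u = 0 := by
      simpa using congrArg (WithLp.equiv 2 (Fin p → ℝ)) hu
    rw [hinner]
    exact hβ _ hu'
  have hmem : ((WithLp.equiv 2 (Fin p → ℝ)).symm β) ∈ LinearMap.range T := by
    have h2 := Submodule.orthogonal_le hSK
    rw [Submodule.orthogonal_orthogonal] at h2
    exact h2 hβK
  obtain ⟨u, hu⟩ := hmem
  refine ⟨(WithLp.equiv 2 (Fin p → ℝ)) u, ?_⟩
  have := congrArg (WithLp.equiv 2 (Fin p → ℝ)) hu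
  simpa [hT] using this

set_option maxHeartbeats 1000000 in
theorem pooled_min_norm_interpolator_is_weighted_ridgeless_limit
    (n₁ n₂ p : ℕ)
    (X1 : Matrix (Fin n₁) (Fin p) ℝ) (X2 : Matrix (Fin n₂) (Fin p) ℝ)
    (y1 : Fin n₁ → ℝ) (y2 : Fin n₂ → ℝ)
    (hfeas : ∃ b : Fin p → ℝ, X1 *ᵥ b = y1 ∧ X2 *ᵥ b = y2)
    (βhat : Fin p → ℝ)
    (hβmem : X1 *ᵥ βhat = y1 ∧ X2 *ᵥ βhat = y2)
    (hβmin : ∀ b : Fin p → ℝ, X1 *ᵥ b = y1 → X2 *ᵥ b = y2 →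
      ∑ i, (βhat i) ^ 2 ≤ ∑ i, (b i) ^ 2)
    (w1 w2 : ℝ) (hw1 : 0 < w1) (hw2 : 0 < w2) (n : ℝ) (hn : 0 < n) :
    (∀ lam : ℝ, 0 < lam →
      IsUnit (w1 • (X1ᵀ * X1) + w2 • (X2ᵀ * X2)
        + (n * lam) • (1 : Matrix (Fin p) (Fin p) ℝ))) ∧
    Tendsto (fun lam : ℝ =>
        (w1 • (X1ᵀ * X1) + w2 • (X2ᵀ * X2)
            + (n * lam) • (1 : Matrix (Fin p) (Fin p) ℝ))⁻¹ *ᵥ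
          (w1 • (X1ᵀ *ᵥ y1) + w2 • (X2ᵀ *ᵥ y2)))
      (𝓝[>] (0 : ℝ)) (𝓝 βhat) := by
  classical
  set A : Matrix (Fin p) (Fin p) ℝ := w1 • (X1ᵀ * X1) + w2 • (X2ᵀ * X2) with hA
  -- quadratic form of A
  have quad : ∀ v : Fin p → ℝ, v ⬝ᵥ (A *ᵥ v)
      = w1 * ((X1 *ᵥ v) ⬝ᵥ (X1 *ᵥ v)) + w2 * ((X2 *ᵥ v) ⬝ᵥ (X2 *ᵥ v)) := by
    intro v
    have h1 : v ⬝ᵥ ((X1ᵀ * X1) *ᵥ v) = (X1 *ᵥ v) ⬝ᵥ (X1 *ᵥ v) := by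
      rw [← mulVec_mulVec, dotProduct_mulVec, vecMul_transpose]
    have h2 : v ⬝ᵥ ((X2ᵀ * X2) *ᵥ v) = (X2 *ᵥ v) ⬝ᵥ (X2 *ᵥ v) := by
      rw [← mulVec_mulVec, dotProduct_mulVec, vecMul_transpose]
    rw [hA, add_mulVec, smul_mulVec, smul_mulVec, dotProduct_add,
      dotProduct_smul, dotProduct_smul, smul_eq_mul, smul_eq_mul, h1, h2]
  have dself : ∀ (m : ℕ) (x : Fin m → ℝ), 0 ≤ x ⬝ᵥ x := fun m x =>
    Finset.sum_nonneg fun i _ => mul_self_nonneg _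
  have quad_nonneg : ∀ v : Fin p → ℝ, 0 ≤ v ⬝ᵥ (A *ᵥ v) := by
    intro v
    rw [quad v]
    have := dself _ (X1 *ᵥ v); have := dself _ (X2 *ᵥ v)
    positivity
  -- quadratic form zero forces membership in both kernels
  have qzero : ∀ v : Fin p → ℝ, v ⬝ᵥ (A *ᵥ v) = 0 → X1 *ᵥ v = 0 ∧ X2 *ᵥ v = 0 := by
    intro v hv
    rw [quad v] at hv
    have d1 := dself _ (X1 *ᵥ v)
    have d2 := dself _ (X2 *ᵥ v)
    constructor
    · exact dotProduct_self_eq_zero.mp (by nlinarith)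
    · exact dotProduct_self_eq_zero.mp (by nlinarith)
  have hAker : ∀ v : Fin p → ℝ, X1 *ᵥ v = 0 → X2 *ᵥ v = 0 → A *ᵥ v = 0 := by
    intro v h1 h2
    rw [hA, add_mulVec, smul_mulVec, smul_mulVec, ← mulVec_mulVec,
      ← mulVec_mulVec, h1, h2, mulVec_zero, mulVec_zero, smul_zero, smul_zero, add_zero]
  -- orthogonality of βhat to the common kernel, from minimality
  have horth : ∀ v : Fin p → ℝ, X1 *ᵥ v = 0 → X2 *ᵥ v = 0 → ∑ i, v i * βhat i = 0 := by
    intro v h1 h2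
    have key : ∀ t : ℝ, 0 ≤ (∑ i, (v i) ^ 2) * (t * t) + (2 * ∑ i, v i * βhat i) * t + 0 := by
      intro t
      have hfeas' : X1 *ᵥ (βhat + t • v) = y1 ∧ X2 *ᵥ (βhat + t • v) = y2 := by
        constructor
        · rw [mulVec_add, mulVec_smul, h1, smul_zero, add_zero, hβmem.1]
        · rw [mulVec_add, mulVec_smul, h2, smul_zero, add_zero, hβmem.2]
      have hmin := hβmin _ hfeas'.1 hfeas'.2
      have expand : ∑ i, ((βhat + t • v) i) ^ 2
          = ∑ i, ((βhat i) ^ 2 + (2 * (v i * βhat i)) * t + ((v i) ^ 2) * (t * t)) :=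
        Finset.sum_congr rfl fun i _ => by
          simp only [Pi.add_apply, Pi.smul_apply, smul_eq_mul]; ring
      rw [expand, Finset.sum_add_distrib, Finset.sum_add_distrib, ← Finset.sum_mul,
        ← Finset.sum_mul, ← Finset.mul_sum] at hmin
      linarith
    have hd := discrim_le_zero key
    rw [discrim] at hd
    nlinarith [hd]
  -- βhat is in the range of A
  have hrange : ∃ u : Fin p → ℝ, A *ᵥ u = βhat := by
    apply exists_mulVec_eq
    · intro v hv
      rw [dotProduct_comm] at hv
      obtain ⟨k1, k2⟩ := qzero v hv
      exact hAker v k1 k2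
    · intro v hv
      have hv' : v ⬝ᵥ (A *ᵥ v) = 0 := by rw [hv, dotProduct_zero]
      obtain ⟨k1, k2⟩ := qzero v hv'
      exact horth v k1 k2
  obtain ⟨u, hu⟩ := hrange
  -- positive definiteness of the regularized matrix
  have hMpd : ∀ lam : ℝ, 0 < lam → (A + (n * lam) • 1).PosDef := by
    intro lam hl
    have hμ : 0 < n * lam := mul_pos hn hl
    rw [posDef_iff_dotProduct_mulVec]
    constructor
    · show (A + (n * lam) • 1)ᴴ = A + (n * lam) • 1
      rw [conjTranspose_eq_transpose_of_trivial]
      rw [hA]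
      simp [transpose_add, transpose_smul, transpose_mul, transpose_transpose]
    · intro x hx
      have hsx : star x = x := by
        funext i; simp
      rw [hsx, add_mulVec, smul_mulVec, one_mulVec, dotProduct_add, dotProduct_smul,
        smul_eq_mul]
      have h1 := quad_nonneg x
      have h2 : 0 < x ⬝ᵥ x := by
        rcases lt_or_eq_of_le (dself _ x) with h | h
        · exact h
        · exact absurd (dotProduct_self_eq_zero.mp h.symm) hx
      nlinarith
  have hunit : ∀ lam : ℝ, 0 < lam → IsUnit (A + (n * lam) • 1) := fun lam hl =>
    (hMpd lam hl).isUnit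
  refine ⟨hunit, ?_⟩
  -- the constant vector c equals A *ᵥ βhat
  have hc : w1 • (X1ᵀ *ᵥ y1) + w2 • (X2ᵀ *ᵥ y2) = A *ᵥ βhat := by
    rw [← hβmem.1, ← hβmem.2, hA, add_mulVec, smul_mulVec, smul_mulVec,
      mulVec_mulVec, mulVec_mulVec]
  set C : ℝ := Real.sqrt (∑ i, (u i) ^ 2) with hC
  have hCnn : 0 ≤ C := Real.sqrt_nonneg _
  -- key pointwise bound
  have key : ∀ lam : ℝ, 0 < lam → ∀ i,
      |((A + (n * lam) • 1)⁻¹ *ᵥ (w1 • (X1ᵀ *ᵥ y1) + w2 • (X2ᵀ *ᵥ y2))) i - βhat i|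
        ≤ n * lam * (|u i| + C) := by
    intro lam hl i
    set μ : ℝ := n * lam with hμdef
    have hμ : 0 < μ := mul_pos hn hl
    set M : Matrix (Fin p) (Fin p) ℝ := A + μ • 1 with hM
    have hdet : IsUnit M.det := (Matrix.isUnit_iff_isUnit_det M).mp (hunit lam hl)
    set v : Fin p → ℝ := M⁻¹ *ᵥ u with hv
    have hMv : M *ᵥ v = u := by
      rw [hv, mulVec_mulVec, Matrix.mul_nonsing_inv _ hdet, one_mulVec]
    have hMx : ∀ x : Fin p → ℝ, M *ᵥ x = A *ᵥ x + μ • x := by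
      intro x
      rw [hM, add_mulVec, smul_mulVec, one_mulVec]
    -- closed form of the estimator
    have hform : M⁻¹ *ᵥ (w1 • (X1ᵀ *ᵥ y1) + w2 • (X2ᵀ *ᵥ y2))
        = βhat - μ • u + μ • μ • v := by
      have hMc : M *ᵥ (βhat - μ • u + μ • μ • v) = w1 • (X1ᵀ *ᵥ y1) + w2 • (X2ᵀ *ᵥ y2) := by
        rw [hc, mulVec_add, mulVec_sub, mulVec_smul, mulVec_smul, mulVec_smul, hMv,
          hMx βhat, hMx u, hu]
        module
      rw [← hMc, mulVec_mulVec, Matrix.nonsing_inv_mul _ hdet, one_mulVec]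
    clear_value v M μ
    -- norm bound on μ • v
    have hb : μ ^ 2 * (∑ j, (v j) ^ 2) ≤ ∑ j, (u j) ^ 2 := by
      have hvv : v ⬝ᵥ v = ∑ j, (v j) ^ 2 := Finset.sum_congr rfl fun j _ => by ring
      have hvu : v ⬝ᵥ u = ∑ j, v j * u j := rfl
      have h1 : μ * (∑ j, (v j) ^ 2) ≤ ∑ j, v j * u j := by
        have e1 : v ⬝ᵥ (M *ᵥ v) = v ⬝ᵥ (A *ᵥ v) + μ * (v ⬝ᵥ v) := by
          rw [hMx v, dotProduct_add, dotProduct_smul, smul_eq_mul]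
        rw [hMv, hvu, hvv] at e1
        have := quad_nonneg v
        linarith
      have h2 := Finset.sum_mul_sq_le_sq_mul_sq Finset.univ v u
      have hvnn : 0 ≤ ∑ j, (v j) ^ 2 := Finset.sum_nonneg fun j _ => sq_nonneg _
      have hunn : 0 ≤ ∑ j, (u j) ^ 2 := Finset.sum_nonneg fun j _ => sq_nonneg _
      rcases eq_or_lt_of_le hvnn with h | h
      · nlinarith
      · have h3 : (μ * ∑ j, (v j) ^ 2) * (μ * ∑ j, (v j) ^ 2)
            ≤ (∑ j, v j * u j) * (∑ j, v j * u j) :=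
          mul_self_le_mul_self (by positivity) h1
        nlinarith [h3, h2, h, hunn]
    have hvi : |μ * v i| ≤ C := by
      have h1 : (μ * v i) ^ 2 ≤ ∑ j, (u j) ^ 2 := by
        have : (v i) ^ 2 ≤ ∑ j, (v j) ^ 2 :=
          Finset.single_le_sum (fun j _ => sq_nonneg (v j)) (Finset.mem_univ i)
        nlinarith
      calc |μ * v i| = Real.sqrt ((μ * v i) ^ 2) := (Real.sqrt_sq_eq_abs _).symm
        _ ≤ C := Real.sqrt_le_sqrt h1
    have hdiff : (M⁻¹ *ᵥ (w1 • (X1ᵀ *ᵥ y1) + w2 • (X2ᵀ *ᵥ y2))) i - βhat i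
        = μ * (μ * v i - u i) := by
      rw [hform]
      simp only [Pi.add_apply, Pi.sub_apply, Pi.smul_apply, smul_eq_mul]
      ring
    show |(M⁻¹ *ᵥ (w1 • (X1ᵀ *ᵥ y1) + w2 • (X2ᵀ *ᵥ y2))) i - βhat i| ≤ μ * (|u i| + C)
    rw [hdiff, abs_mul, abs_of_pos hμ]
    have : |μ * v i - u i| ≤ |u i| + C := by
      calc |μ * v i - u i| ≤ |μ * v i| + |u i| := abs_sub _ _
        _ ≤ C + |u i| := by linarith
        _ = |u i| + C := by ring
    have := mul_le_mul_of_nonneg_left this hμ.le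
    linarith
  -- conclude the limit componentwise
  rw [tendsto_pi_nhds]
  intro i
  rw [← tendsto_sub_nhds_zero_iff]
  apply squeeze_zero_norm' (a := fun lam => n * lam * (|u i| + C))
  · filter_upwards [eventually_mem_nhdsWithin] with lam hlam
    exact key lam hlam i
  · have hcont : Tendsto (fun lam : ℝ => n * lam * (|u i| + C)) (𝓝 0) (𝓝 0) := by
      have h0 : Continuous fun lam : ℝ => n * lam * (|u i| + C) := by continuity
      have := h0.tendsto 0
      simpa using this
    exact hcont.mono_left nhdsWithin_le_nhds
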